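/- Let A = ℤ[b₁, b₂, …] be the polynomial ring over ℤ in variables b(k) for k ≥ 1, set b(0) = 1, and let Δ : A → A ⊗_ℤ A be the unique ℤ-algebra homomorphism with Δ(b(n)) = ∑_{i=0}^{n} b(i) ⊗ b(n−i) for all n ≥ 1. Assign b(k) the weight k, and let N be the Newton sequence of the sequence of variables b. Then for every n ≥ 1, every element f ∈ A that is weighted-homogeneous of weight n and satisfies Δ(f) = f ⊗ 1 + 1 ⊗ f is an integer multiple of N(n); i.e., N(n) generates the group of primitive elements in weight n. -/

import Mathlib

/-- The Newton sequence of a sequence `t : ℕ → R`: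
`N 0 = 0`, `N 1 = t 1`, and for `n ≥ 2`,
`N n = (∑_{k=1}^{n-1} (-1)^(k-1) * t k * N (n-k)) + (-1)^(n-1) * n * t n`. -/
noncomputable def newton {R : Type*} [CommRing R] (t : ℕ → R) : ℕ → R
  | 0 => 0
  | 1 => t 1
  | n + 2 =>
      (∑ k ∈ (Finset.Icc 1 (n + 1)).attach,
        (-1 : R) ^ ((k : ℕ) - 1) * t (k : ℕ) * newton t (n + 2 - (k : ℕ)))
      + (-1 : R) ^ (n + 1) * ((n + 2 : ℕ) : R) * t (n + 2)
decreasing_by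
  have hk := k.2
  simp only [Finset.mem_Icc] at hk
  omega

open MvPolynomial TensorProduct

namespace NGP

abbrev A : Type := MvPolynomial ℕ+ ℤ

noncomputable def v (j k : ℕ+) : A :=
  if (j : ℕ) < (k : ℕ) then X (k - j) else if j = k then 1 else 0

noncomputable def Dop (j : ℕ+) : Derivation ℤ A A := mkDerivation ℤ (v j)

lemma Dop_X (j k : ℕ+) : Dop j (X k) = v j k := mkDerivation_X _ _ _

noncomputable def E : A ⊗[ℤ] A →ₐ[ℤ] A :=
  (Algebra.TensorProduct.lid ℤ A).toAlgHom.comp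
    (Algebra.TensorProduct.map (constantCoeff.toIntAlgHom) (AlgHom.id ℤ A))

lemma E_tmul (x y : A) : E (x ⊗ₜ[ℤ] y) = constantCoeff x • y := by
  rfl

noncomputable def Lam (j : ℕ+) : A ⊗[ℤ] A →ₗ[ℤ] A :=
  (TensorProduct.lid ℤ A).toLinearMap ∘ₗ
    (TensorProduct.map (lcoeff ℤ (Finsupp.single j 1)) LinearMap.id)

lemma Lam_tmul (j : ℕ+) (x y : A) :
    Lam j (x ⊗ₜ[ℤ] y) = coeff (Finsupp.single j 1) x • y := by
  rfl

lemma coeff_single_mul (j : ℕ+) (p q : A) :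
    coeff (Finsupp.single j 1) (p * q) =
      coeff (Finsupp.single j 1) p * constantCoeff q
      + constantCoeff p * coeff (Finsupp.single j 1) q := by
  rw [coeff_mul, Finsupp.antidiagonal_single]
  rw [Finset.sum_map]
  simp only [Function.Embedding.coe_prodMap, Function.Embedding.coeFn_mk, Prod.map_apply]
  have : (Finset.HasAntidiagonal.antidiagonal (1:ℕ)) = {(0,1),(1,0)} := rfl
  rw [this]
  simp [Finsupp.single_zero, constantCoeff_eq, add_comm, mul_comm]

lemma Lam_mul (j : ℕ+) (u w : A ⊗[ℤ] A) :
    Lam j (u * w) = Lam j u * E w + E u * Lam j w := by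
  induction u using TensorProduct.induction_on with
  | zero => simp
  | add u₁ u₂ h1 h2 => rw [add_mul, map_add, h1, h2, map_add, map_add]; ring
  | tmul x y =>
    induction w using TensorProduct.induction_on with
    | zero => simp
    | add w₁ w₂ h1 h2 => rw [mul_add, map_add, h1, h2, map_add, map_add]; ring
    | tmul x' y' =>
      rw [Algebra.TensorProduct.tmul_mul_tmul, Lam_tmul, Lam_tmul, Lam_tmul,
        E_tmul, E_tmul, coeff_single_mul]
      simp only [zsmul_eq_mul, smul_eq_mul]
      push_cast
      ring

section Coalg

variable (b : ℕ → A) (hb0 : b 0 = 1) (hb : ∀ k : ℕ+, b k = X k)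
variable (Δ : A →ₐ[ℤ] A ⊗[ℤ] A)
variable (hΔ : ∀ n : ℕ, 1 ≤ n → Δ (b n) = ∑ i ∈ Finset.range (n + 1), b i ⊗ₜ[ℤ] b (n - i))

include hb0 hb in
lemma ccb (i : ℕ) : constantCoeff (b i) = if i = 0 then 1 else 0 := by
  cases i with
  | zero => simp [hb0]
  | succ m =>
    rw [show b (m + 1) = X (Nat.toPNat (m + 1) (Nat.succ_pos m)) from hb (Nat.toPNat (m + 1) (Nat.succ_pos m))]
    simp

include hb0 hb in
lemma coeffb (j : ℕ+) (i : ℕ) :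
    coeff (Finsupp.single j 1) (b i) = if i = (j : ℕ) then 1 else 0 := by
  cases i with
  | zero =>
    rw [hb0, coeff_one]
    rw [if_neg (by simp [eq_comm, Finsupp.single_eq_zero]),
      if_neg (by exact_mod_cast (Nat.ne_of_lt j.pos))]
  | succ m =>
    rw [show b (m + 1) = X (Nat.toPNat (m + 1) (Nat.succ_pos m)) from hb (Nat.toPNat (m + 1) (Nat.succ_pos m)),
      coeff_X']
    have : (Finsupp.single (Nat.toPNat (m + 1) (Nat.succ_pos m)) (1:ℕ) = Finsupp.single j 1)
        ↔ (m + 1 : ℕ) = (j : ℕ) := by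
      rw [Finsupp.single_left_inj one_ne_zero]
      exact ⟨fun h => by rw [← h]; rfl, fun h => PNat.coe_injective h⟩
    simp only [this]

include hb0 hb hΔ in
lemma E_Delta : ∀ p : A, E (Δ p) = p := by
  have : E.comp Δ = AlgHom.id ℤ A := by
    apply MvPolynomial.algHom_ext
    intro k
    rw [AlgHom.comp_apply, AlgHom.id_apply, ← hb k, hΔ (k : ℕ) k.one_le, map_sum]
    have h1 : ∀ i ∈ Finset.range ((k : ℕ) + 1),
        E (b i ⊗ₜ[ℤ] b ((k : ℕ) - i)) = if i = 0 then b ((k : ℕ) - i) else 0 := by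
      intro i _
      rw [E_tmul, ccb b hb0 hb, ite_smul, one_smul, zero_smul]
    rw [Finset.sum_congr rfl h1, Finset.sum_ite_eq' (Finset.range ((k:ℕ)+1)) 0
      (fun i => b ((k:ℕ) - i)), if_pos (Finset.mem_range.mpr (Nat.succ_pos _)), Nat.sub_zero]
  intro p
  exact DFunLike.congr_fun this p

include hb0 hb hΔ in
lemma Lam_Delta_X (j k : ℕ+) : Lam j (Δ (X k)) = v j k := by
  rw [← hb k, hΔ (k : ℕ) k.one_le, map_sum]
  have h1 : ∀ i ∈ Finset.range ((k : ℕ) + 1),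
      Lam j (b i ⊗ₜ[ℤ] b ((k : ℕ) - i)) = if i = (j:ℕ) then b ((k : ℕ) - i) else 0 := by
    intro i _
    rw [Lam_tmul, coeffb b hb0 hb, ite_smul, one_smul, zero_smul]
  rw [Finset.sum_congr rfl h1, Finset.sum_ite_eq' (Finset.range ((k:ℕ)+1)) (j:ℕ)
    (fun i => b ((k:ℕ) - i))]
  unfold v
  rcases lt_trichotomy (j:ℕ) (k:ℕ) with h | h | h
  · rw [if_pos (Finset.mem_range.mpr (by omega)), if_pos (by exact_mod_cast h)]
    rw [show b ((k:ℕ) - (j:ℕ)) = X ((k - j : ℕ+)) from ?_]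
    · rw [← hb (k - j)]
      congr 1
      rw [PNat.sub_coe, if_pos (by exact_mod_cast h)]
  · rw [if_pos (Finset.mem_range.mpr (by omega)), if_neg (by omega),
      if_pos (PNat.coe_injective h : j = k), h, Nat.sub_self, hb0]
  · rw [if_neg (by simp only [Finset.mem_range]; omega), if_neg (by omega), if_neg (fun hjk => by
      rw [hjk] at h; omega)]

include hb0 hb hΔ in
lemma Lam_Delta (j : ℕ+) : ∀ p : A, Lam j (Δ p) = Dop j p := by
  intro p
  induction p using MvPolynomial.induction_on with
  | C a =>
    have h1 : (C a : A) = a • (1 : A) := by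
      rw [← MvPolynomial.algebraMap_eq, Algebra.algebraMap_eq_smul_one]
    rw [h1]
    rw [map_zsmul Δ, map_zsmul (Lam j)]
    rw [Derivation.map_smul, Derivation.map_one_eq_zero, smul_zero, map_one Δ,
      Algebra.TensorProduct.one_def, Lam_tmul]
    simp [MvPolynomial.coeff_one, Finsupp.single_eq_zero]
    intro h
    exact absurd h.symm (by simp [Finsupp.single_eq_zero])
  | add p q hp hq => rw [map_add, map_add, hp, hq, map_add]
  | mul_X p k hp =>
    rw [map_mul, Lam_mul, E_Delta b hb0 hb Δ hΔ, E_Delta b hb0 hb Δ hΔ,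
      Lam_Delta_X b hb0 hb Δ hΔ, hp, Derivation.leibniz, smul_eq_mul, smul_eq_mul, Dop_X]
    ring

end Coalg

/-! ### Joint kernel of the lowering operators -/

lemma sub_single_add (e : ℕ+ →₀ ℕ) (i : ℕ+) (h : e i ≠ 0) :
    (e - Finsupp.single i 1) + Finsupp.single i 1 = e :=
  tsub_add_cancel_of_le (Finsupp.single_le_iff.mpr (Nat.one_le_iff_ne_zero.mpr h))

lemma degree_add (x y : ℕ+ →₀ ℕ) : (x + y).degree = x.degree + y.degree := by
  show (x + y).sum (fun _ m => m) = x.sum (fun _ m => m) + y.sum (fun _ m => m)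
  exact Finsupp.sum_add_index' (fun _ => rfl) (fun _ _ _ => rfl)

lemma degree_single (i : ℕ+) (n : ℕ) : (Finsupp.single i n).degree = n := by
  show (Finsupp.single i n).sum (fun _ m => m) = n
  exact Finsupp.sum_single_index rfl

/-- χ-factor in the coefficient formula for `Dop`. -/
noncomputable def chi (j : ℕ+) (μ e : ℕ+ →₀ ℕ) (i : ℕ+) : ℤ :=
  if (j : ℕ) < (i : ℕ) then
    (if e - Finsupp.single i 1 + Finsupp.single (i - j) 1 = μ then 1 else 0)
  else if j = i then (if e - Finsupp.single i 1 = μ then 1 else 0) else 0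

lemma v_of_lt {j i : ℕ+} (h : (j : ℕ) < (i : ℕ)) : v j i = X (i - j) := by
  rw [v, if_pos h]

lemma v_of_eq (j : ℕ+) : v j j = 1 := by
  rw [v, if_neg (lt_irrefl _), if_pos rfl]

lemma v_of_gt {j i : ℕ+} (h : (i : ℕ) < (j : ℕ)) : v j i = 0 := by
  rw [v, if_neg (by omega), if_neg (fun hji => by rw [hji] at h; omega)]

lemma chi_of_lt {j i : ℕ+} (μ e : ℕ+ →₀ ℕ) (h : (j : ℕ) < (i : ℕ)) :
    chi j μ e i = if e - Finsupp.single i 1 + Finsupp.single (i - j) 1 = μ then 1 else 0 := by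
  rw [chi, if_pos h]

lemma chi_of_eq (j : ℕ+) (μ e : ℕ+ →₀ ℕ) :
    chi j μ e j = if e - Finsupp.single j 1 = μ then 1 else 0 := by
  rw [chi, if_neg (lt_irrefl _), if_pos rfl]

lemma chi_of_gt {j i : ℕ+} (μ e : ℕ+ →₀ ℕ) (h : (i : ℕ) < (j : ℕ)) : chi j μ e i = 0 := by
  rw [chi, if_neg (by omega), if_neg (fun hji => by rw [hji] at h; omega)]

lemma coeff_Dop_monomial (j : ℕ+) (e : ℕ+ →₀ ℕ) (r : ℤ) (μ : ℕ+ →₀ ℕ) :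
    coeff μ (Dop j (monomial e r)) =
      r * ∑ i ∈ e.support, (e i : ℤ) * chi j μ e i := by
  rw [show Dop j (monomial e r) = mkDerivation ℤ (v j) (monomial e r) from rfl,
    mkDerivation_monomial]
  rw [smul_eq_C_mul, coeff_C_mul, Finsupp.sum, coeff_sum]
  congr 1
  apply Finset.sum_congr rfl
  intro i hi
  rw [smul_eq_mul]
  rcases lt_trichotomy (j : ℕ) (i : ℕ) with h | h | h
  · rw [v_of_lt h, chi_of_lt μ e h,
      show (X (i - j) : A) = monomial (Finsupp.single (i - j) 1) 1 from rfl,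
      monomial_mul, mul_one, coeff_monomial]
    split <;> simp
  · obtain rfl : j = i := PNat.coe_injective h
    rw [v_of_eq, chi_of_eq, mul_one, coeff_monomial]
    split <;> simp
  · rw [v_of_gt h, chi_of_gt μ e h, mul_zero, coeff_zero, mul_zero]
lemma coeff_eq_zero_of_Dop_ker (g : A) (hg : ∀ j : ℕ+, Dop j g = 0) :
    ∀ s : ℕ, ∀ d : ℕ+ →₀ ℕ, d ≠ 0 → d.degree = s → coeff d g = 0 := by
  intro s
  induction s using Nat.strong_induction_on with
  | _ s IH =>
  intro d hd hds
  by_cases hdg : d ∈ g.support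
  swap
  · simpa [MvPolynomial.mem_support_iff, not_not] using hdg
  obtain ⟨j, hj⟩ := Finsupp.support_nonempty_iff.mpr hd
  have hdj : d j ≠ 0 := Finsupp.mem_support_iff.mp hj
  set μ := d - Finsupp.single j 1 with hμdef
  have hdμ : μ + Finsupp.single j 1 = d := sub_single_add d j hdj
  have hs1 : 1 ≤ s := by
    rcases Nat.eq_zero_or_pos s with h | h
    · exact absurd (Finsupp.degree_eq_zero_iff d |>.mp (hds.trans h)) hd
    · exact h
  have hdegμ : μ.degree = s - 1 := by
    have := degree_add μ (Finsupp.single j 1)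
    rw [hdμ, degree_single, hds] at this
    omega
  -- expand the equation coeff μ (Dop j g) = 0
  have h0 : coeff μ (Dop j g) = 0 := by rw [hg j]; simp
  have hexp : Dop j g = ∑ e ∈ g.support, Dop j (monomial e (coeff e g)) := by
    conv_lhs => rw [← support_sum_monomial_coeff g]
    rw [map_sum]
  rw [hexp, coeff_sum] at h0
  have hsplit : ∀ e ∈ g.support, e ≠ d → coeff μ (Dop j (monomial e (coeff e g))) = 0 := by
    intro e _ hed
    rw [coeff_Dop_monomial]
    by_cases hce : coeff e g = 0
    · rw [hce, zero_mul]
    rw [Finset.sum_eq_zero, mul_zero]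
    intro i hi
    have hei : e i ≠ 0 := Finsupp.mem_support_iff.mp hi
    rcases lt_trichotomy (j : ℕ) (i : ℕ) with h | h | h
    · rw [chi_of_lt μ e h, if_neg, mul_zero]
      intro hcond
      -- degree analysis: degree e = s - 1, e ≠ 0
      have he0 : e ≠ 0 := fun h' => by rw [h'] at hei; simp at hei
      have hdege : e.degree = s - 1 := by
        have h1 : (e - Finsupp.single i 1).degree + 1 = e.degree := by
          have := degree_add (e - Finsupp.single i 1) (Finsupp.single i 1)
          rw [sub_single_add e i hei, degree_single] at this
          omega
        have h2 : (e - Finsupp.single i 1).degree + 1 = μ.degree := by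
          rw [← hcond, degree_add, degree_single]
        omega
      have hepos : 1 ≤ e.degree := by
        rcases Nat.eq_zero_or_pos e.degree with h' | h'
        · exact absurd ((Finsupp.degree_eq_zero_iff e).mp h') he0
        · exact h'
      exact hce (IH (s - 1) (by omega) e he0 hdege)
    · obtain rfl : j = i := PNat.coe_injective h
      rw [chi_of_eq, if_neg, mul_zero]
      intro hcond
      apply hed
      rw [← hdμ, ← hcond]
      exact (sub_single_add e j hei).symm
    · rw [chi_of_gt μ e h, mul_zero]
  rw [Finset.sum_eq_single_of_mem d hdg hsplit, coeff_Dop_monomial] at h0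
  have hTd : ∑ i ∈ d.support, (d i : ℤ) * chi j μ d i = (d j : ℤ) := by
    rw [Finset.sum_eq_single_of_mem j hj]
    · rw [chi_of_eq, if_pos rfl, mul_one]
    · intro i hi hij
      rcases lt_trichotomy (j : ℕ) (i : ℕ) with h | h | h
      · rw [chi_of_lt μ d h, if_neg, mul_zero]
        intro hcond
        have hei : d i ≠ 0 := Finsupp.mem_support_iff.mp hi
        have h1 : (d - Finsupp.single i 1).degree + 1 = d.degree := by
          have := degree_add (d - Finsupp.single i 1) (Finsupp.single i 1)
          rw [sub_single_add d i hei, degree_single] at this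
          omega
        have h2 : (d - Finsupp.single i 1).degree + 1 = μ.degree := by
          rw [← hcond, degree_add, degree_single]
        omega
      · exact absurd (PNat.coe_injective h) (fun h' => hij h'.symm)
      · rw [chi_of_gt μ d h, mul_zero]
  rw [hTd] at h0
  rcases mul_eq_zero.mp h0 with h | h
  · exact h
  · exact absurd h (by exact_mod_cast hdj)

/-! ### Newton elements -/

lemma newton_rec {R : Type*} [CommRing R] (t : ℕ → R) (n : ℕ) :
    newton t (n + 2) = (∑ k ∈ Finset.Icc 1 (n + 1),
        (-1 : R) ^ (k - 1) * t k * newton t (n + 2 - k))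
      + (-1 : R) ^ (n + 1) * ((n + 2 : ℕ) : R) * t (n + 2) := by
  rw [newton]
  congr 1
  exact Finset.sum_attach (Finset.Icc 1 (n+1))
    (fun k => (-1 : R) ^ (k - 1) * t k * newton t (n + 2 - k))

lemma newton_sum {R : Type*} [CommRing R] (t : ℕ → R) (m : ℕ) (hm : 1 ≤ m) :
    ∑ k ∈ Finset.Icc 1 (m - 1), (-1 : R) ^ (k - 1) * t k * newton t (m - k)
      = newton t m - (-1 : R) ^ (m - 1) * (m : R) * t m := by
  match m, hm with
  | 1, _ => simp [newton]
  | (l + 2), _ =>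
    rw [show l + 2 - 1 = l + 1 from rfl, newton_rec]
    push_cast
    ring

lemma negpowC (c : ℕ) : ((-1 : A)) ^ c = C ((-1 : ℤ) ^ c) := by
  rw [map_pow, map_neg, map_one]

section NewtonB

variable (b : ℕ → A) (hb0 : b 0 = 1) (hb : ∀ k : ℕ+, b k = X k)

lemma term_eq (c : ℕ) (p q : A) : (-1 : A) ^ c * p * q = C ((-1 : ℤ) ^ c) * (p * q) := by
  rw [negpowC, mul_assoc]

lemma newton_recC (n : ℕ) :
    newton b (n + 2) = (∑ k ∈ Finset.Icc 1 (n + 1),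
        C ((-1 : ℤ) ^ (k - 1)) * (b k * newton b (n + 2 - k)))
      + C ((-1 : ℤ) ^ (n + 1) * ((n + 2 : ℕ) : ℤ)) * b (n + 2) := by
  rw [newton_rec]
  congr 1
  · exact Finset.sum_congr rfl fun k _ => term_eq _ _ _
  · rw [map_mul, ← negpowC, map_natCast (C : ℤ →+* A), mul_assoc]

lemma newton_sumC (m : ℕ) (hm : 1 ≤ m) :
    ∑ k ∈ Finset.Icc 1 (m - 1), C ((-1 : ℤ) ^ (k - 1)) * (b k * newton b (m - k))
      = newton b m - C ((-1 : ℤ) ^ (m - 1) * (m : ℤ)) * b m := by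
  have := newton_sum b m hm
  rw [Finset.sum_congr rfl (fun k _ => (term_eq (k-1) (b k) (newton b (m-k))).symm), this]
  congr 1
  rw [map_mul, ← negpowC, map_natCast (C : ℤ →+* A), mul_assoc]

include hb0 hb in
lemma Dop_b (j : ℕ+) (i : ℕ) (hi : 1 ≤ i) :
    Dop j (b i) = if (j : ℕ) ≤ i then b (i - (j : ℕ)) else 0 := by
  set i' : ℕ+ := (⟨i, hi⟩ : ℕ+) with hi'
  rw [show b i = X i' from hb i', Dop_X]
  rcases lt_trichotomy (j : ℕ) i with h | h | h
  · rw [v_of_lt (show (j : ℕ) < (i' : ℕ) from h), if_pos (le_of_lt h)]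
    rw [show b (i - (j : ℕ)) = X (i' - j) from ?_]
    rw [← hb (i' - j)]
    congr 1
    rw [PNat.sub_coe, if_pos (show j < i' from by exact_mod_cast h)]
    rfl
  · have hji : j = i' := PNat.coe_injective h
    rw [← hji, v_of_eq, if_pos (le_of_eq h), h, Nat.sub_self, hb0]
  · rw [v_of_gt (show (i' : ℕ) < (j : ℕ) from h), if_neg (by omega)]

lemma Dop_C_mul (j : ℕ+) (c : ℤ) (w : A) : Dop j (C c * w) = C c * Dop j w := by
  rw [← smul_eq_C_mul, Derivation.map_smul, smul_eq_C_mul]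

lemma Dop_mul (j : ℕ+) (p q : A) : Dop j (p * q) = Dop j p * q + p * Dop j q := by
  rw [Derivation.leibniz, smul_eq_mul, smul_eq_mul]
  ring

include hb0 hb in
lemma Dop_newton : ∀ n : ℕ, 1 ≤ n → ∀ j : ℕ+,
    Dop j (newton b n) = if (j : ℕ) = n then C ((-1 : ℤ) ^ (n - 1) * (n : ℤ)) else 0 := by
  intro n
  induction n using Nat.strong_induction_on with
  | _ n IH =>
  intro hn j
  match n, hn with
  | 1, _ =>
    rw [show newton b 1 = b 1 from by rw [newton], Dop_b b hb0 hb j 1 le_rfl]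
    have h1 : (j : ℕ) ≤ 1 ↔ (j : ℕ) = 1 := by have := j.pos; omega
    by_cases h : (j : ℕ) = 1
    · rw [if_pos (h1.mpr h), if_pos h, h, Nat.sub_self, hb0]
      norm_num
    · rw [if_neg (fun hc => h (h1.mp hc)), if_neg h]
  | (m + 2), _ =>
    rw [newton_recC b, map_add, map_sum]
    have hterm : ∀ k ∈ Finset.Icc 1 (m + 1),
        Dop j (C ((-1 : ℤ) ^ (k - 1)) * (b k * newton b (m + 2 - k)))
          = C ((-1 : ℤ) ^ (k - 1)) *
            (Dop j (b k) * newton b (m + 2 - k) + b k * Dop j (newton b (m + 2 - k))) := by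
      intro k _
      rw [Dop_C_mul, Dop_mul]
    rw [Finset.sum_congr rfl hterm, Dop_C_mul]
    rcases lt_trichotomy (j : ℕ) (m + 2) with hj | hj | hj
    · -- j ≤ m + 1
      set J := (j : ℕ) with hJdef
      have hJ1 : 1 ≤ J := j.pos
      have hJm : J ≤ m + 1 := by omega
      set M := m + 2 - J with hMdef
      have hM1 : 1 ≤ M := by omega
      have hsplit : ∀ k ∈ Finset.Icc 1 (m + 1),
          C ((-1 : ℤ) ^ (k - 1)) *
            (Dop j (b k) * newton b (m + 2 - k) + b k * Dop j (newton b (m + 2 - k)))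
          = C ((-1 : ℤ) ^ (k - 1)) * (Dop j (b k) * newton b (m + 2 - k))
            + C ((-1 : ℤ) ^ (k - 1)) * (b k * Dop j (newton b (m + 2 - k))) := by
        intro k _; ring
      rw [Finset.sum_congr rfl hsplit, Finset.sum_add_distrib]
      -- second sum
      have hS2 : ∑ k ∈ Finset.Icc 1 (m + 1),
          C ((-1 : ℤ) ^ (k - 1)) * (b k * Dop j (newton b (m + 2 - k)))
          = C ((-1 : ℤ) ^ m * (J : ℤ)) * b M := by
        rw [Finset.sum_eq_single_of_mem M (Finset.mem_Icc.mpr ⟨by omega, by omega⟩)]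
        · rw [show m + 2 - M = J from by omega,
            IH J (by omega) (by omega) j, if_pos rfl]
          rw [show (C ((-1 : ℤ) ^ (M - 1)) * (b M * C ((-1:ℤ) ^ (J - 1) * (J:ℤ))) : A)
            = C ((-1 : ℤ) ^ (M - 1) * ((-1:ℤ) ^ (J - 1) * (J:ℤ))) * b M from by
              simp only [C_mul]; ring]
          congr 2
          rw [← mul_assoc, ← pow_add]
          congr 2
          omega
        · intro k hk hkM
          rw [IH (m + 2 - k) (by simp [Finset.mem_Icc] at hk; omega)
            (by simp [Finset.mem_Icc] at hk; omega) j, if_neg (by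
              simp [Finset.mem_Icc] at hk; omega), mul_zero, mul_zero]
      rw [hS2]
      -- first sum
      have hDb : ∀ k ∈ Finset.Icc 1 (m + 1), Dop j (b k)
          = if J ≤ k then b (k - J) else 0 := by
        intro k hk
        simp only [Finset.mem_Icc] at hk
        exact Dop_b b hb0 hb j k hk.1
      have hS1 : ∑ k ∈ Finset.Icc 1 (m + 1),
          C ((-1 : ℤ) ^ (k - 1)) * (Dop j (b k) * newton b (m + 2 - k))
          = C ((-1 : ℤ) ^ m * (M : ℤ)) * b M := by
        rw [Finset.sum_congr rfl (fun k hk => by rw [hDb k hk])]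
        rw [← Finset.sum_subset (Finset.Icc_subset_Icc_left hJ1 :
            Finset.Icc J (m + 1) ⊆ Finset.Icc 1 (m + 1)) (by
          intro k hk hk2
          simp only [Finset.mem_Icc] at hk hk2
          rw [if_neg (by omega), zero_mul, mul_zero])]
        rw [Finset.sum_congr rfl (fun k hk => by
          simp only [Finset.mem_Icc] at hk
          rw [if_pos hk.1])]
        -- reindex
        have hmap : Finset.Icc J (m + 1)
            = (Finset.Icc 0 (m + 1 - J)).map (addLeftEmbedding J) := by
          rw [Finset.map_add_left_Icc, add_zero, show J + (m + 1 - J) = m + 1 from by omega]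
        rw [hmap, Finset.sum_map]
        simp only [addLeftEmbedding_apply]
        rw [Finset.sum_congr rfl (fun l hl => by
          rw [show J + l - J = l from by omega, show m + 2 - (J + l) = M - l from by omega])]
        have hins : Finset.Icc 0 (m + 1 - J) = insert 0 (Finset.Icc 1 (m + 1 - J)) := by
          apply Finset.ext
          intro x
          simp only [Finset.mem_Icc, Finset.mem_insert]
          omega
        rw [hins, Finset.sum_insert (by simp)]
        rw [show J + 0 - 1 = J - 1 from by omega, Nat.sub_zero, hb0, one_mul]
        rw [Finset.sum_congr rfl (fun l hl => by
          simp only [Finset.mem_Icc] at hl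
          rw [show (C ((-1:ℤ) ^ (J + l - 1)) : A) = C ((-1:ℤ)^J) * C ((-1:ℤ)^(l-1)) from by
            rw [← map_mul, ← pow_add]
            congr 2
            omega])]
        rw [Finset.sum_congr rfl (fun l _ => mul_assoc _ _ _), ← Finset.mul_sum]
        rw [show m + 1 - J = M - 1 from by omega, newton_sumC b M hM1]
        -- combine
        rw [mul_sub]
        have hJn : (C ((-1:ℤ) ^ (J - 1)) : A) = - C ((-1:ℤ) ^ J) := by
          have h2 : (-1:ℤ) ^ J = (-1) ^ (J - 1) * (-1) := by
            rw [← pow_succ]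
            congr 1
            omega
          rw [← map_neg]
          congr 1
          rw [h2]
          ring
        rw [hJn]
        rw [show (- C ((-1:ℤ)^J) * newton b M + (C ((-1:ℤ)^J) * newton b M
            - C ((-1:ℤ)^J) * (C ((-1:ℤ)^(M-1) * (M:ℤ)) * b M)) : A)
          = - (C ((-1:ℤ)^J) * C ((-1:ℤ)^(M-1) * (M:ℤ))) * b M from by ring]
        rw [show (C ((-1:ℤ)^J) * C ((-1:ℤ)^(M-1) * (M:ℤ)) : A)
            = C ((-1:ℤ)^J * ((-1:ℤ)^(M-1) * (M:ℤ))) from by simp only [C_mul]]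
        rw [← map_neg]
        congr 2
        rw [show (-((-1:ℤ)^J * ((-1:ℤ)^(M-1) * (M:ℤ)))) = -((-1:ℤ)^(J + (M-1))) * (M:ℤ) from by
          rw [pow_add]; ring]
        rw [show J + (M - 1) = m + 1 from by omega]
        rw [show (-(-1:ℤ)^(m+1)) = (-1:ℤ)^(m+2) from by rw [pow_succ (-1:ℤ) (m+1)]; ring,
          show m + 2 = m + 2 from rfl]
        rw [show (m:ℕ) + 2 = (m + 1) + 1 from rfl]
        rw [pow_succ, pow_succ]
        ring
      rw [hS1]
      -- last term
      rw [Dop_b b hb0 hb j (m + 2) (by omega), if_pos (by omega)]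
      rw [if_neg (by omega)]
      rw [show (m + 2 - (j:ℕ)) = M from rfl]
      rw [show (C ((-1:ℤ)^(m+1) * ((m+2:ℕ):ℤ)) * b M : A)
          = C ((-1:ℤ)^(m+1) * ((m+2:ℕ):ℤ)) * b M from rfl]
      rw [show (C ((-1:ℤ)^m * ((M:ℕ):ℤ)) * b M + C ((-1:ℤ)^m * ((J:ℕ):ℤ)) * b M
          + C ((-1:ℤ)^(m+1) * ((m+2:ℕ):ℤ)) * b M : A)
        = C ((-1:ℤ)^m * (((M:ℕ):ℤ) + ((J:ℕ):ℤ)) + (-1:ℤ)^(m+1) * ((m+2:ℕ):ℤ)) * b M from by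
          simp only [C_mul, C_add]; ring]
      rw [show ((-1:ℤ)^m * (((M:ℕ):ℤ) + ((J:ℕ):ℤ)) + (-1:ℤ)^(m+1) * ((m+2:ℕ):ℤ)) = 0 from by
        have hMJ : ((M:ℕ):ℤ) + ((J:ℕ):ℤ) = ((m+2:ℕ):ℤ) := by push_cast; omega
        rw [hMJ, pow_succ]
        ring]
      rw [map_zero, zero_mul]
    · -- j = m + 2
      rw [Finset.sum_eq_zero (fun k hk => by
        simp only [Finset.mem_Icc] at hk
        rw [Dop_b b hb0 hb j k hk.1, if_neg (by omega),
          IH (m + 2 - k) (by omega) (by omega) j, if_neg (by omega)]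
        ring), Dop_b b hb0 hb j (m + 2) (by omega), if_pos (by omega),
        show m + 2 - (j:ℕ) = 0 from by omega, hb0, if_pos hj, mul_one, zero_add,
        show m + 2 - 1 = m + 1 from rfl]
    · -- j > m + 2
      rw [Finset.sum_eq_zero (fun k hk => by
        simp only [Finset.mem_Icc] at hk
        rw [Dop_b b hb0 hb j k hk.1, if_neg (by omega),
          IH (m + 2 - k) (by omega) (by omega) j, if_neg (by omega)]
        ring), Dop_b b hb0 hb j (m + 2) (by omega), if_neg (by omega), if_neg (by omega),
        mul_zero, zero_add]

include hb0 hb in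
lemma cc_newton (n : ℕ) (hn : 1 ≤ n) : constantCoeff (newton b n) = 0 := by
  match n, hn with
  | 1, _ =>
    rw [show newton b 1 = b 1 from by rw [newton], ccb b hb0 hb, if_neg one_ne_zero]
  | (m + 2), _ =>
    rw [newton_recC b, map_add, map_sum, Finset.sum_eq_zero (fun k hk => by
      simp only [Finset.mem_Icc] at hk
      rw [map_mul, map_mul, ccb b hb0 hb, if_neg (by omega)]
      ring), map_mul, ccb b hb0 hb, if_neg (by omega), mul_zero, add_zero]

include hb0 hb in
lemma coeff_newton_X1 : ∀ n : ℕ, 1 ≤ n →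
    coeff (Finsupp.single (1 : ℕ+) n) (newton b n) = 1 := by
  intro n
  induction n using Nat.strong_induction_on with
  | _ n IH =>
  intro hn
  match n, hn with
  | 1, _ =>
    rw [show newton b 1 = b 1 from by rw [newton],
      show (Finsupp.single (1:ℕ+) 1) = Finsupp.single (1:ℕ+) 1 from rfl,
      coeffb b hb0 hb 1 1]
    norm_num
  | (m + 2), _ =>
    rw [newton_recC b, coeff_add, coeff_C_mul]
    have hlast : coeff (Finsupp.single (1:ℕ+) (m + 2)) (b (m + 2)) = 0 := by
      rw [show b (m + 2) = X (Nat.toPNat (m + 2) (by omega)) from hb (Nat.toPNat (m + 2) (by omega)), coeff_X']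
      rw [if_neg]
      intro hcon
      have := DFunLike.congr_fun hcon (1 : ℕ+)
      rw [Finsupp.single_eq_same] at this
      rw [Finsupp.single_eq_of_ne (by
        intro hx
        have : ((⟨m + 2, by omega⟩ : ℕ+) : ℕ) = ((1:ℕ+):ℕ) := congrArg (fun z : ℕ+ => (z : ℕ)) hx.symm
        simp at this)] at this
      omega
    rw [hlast, mul_zero, add_zero, coeff_sum,
      Finset.sum_eq_single_of_mem 1 (Finset.mem_Icc.mpr ⟨le_rfl, by omega⟩)]
    · rw [coeff_C_mul, show (1:ℕ) - 1 = 0 from rfl, pow_zero, one_mul,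
        show b 1 = X (1 : ℕ+) from hb 1,
        show (Finsupp.single (1:ℕ+) (m + 2)) =
          Finsupp.single (1:ℕ+) 1 + Finsupp.single (1:ℕ+) (m + 1) from by
            rw [← Finsupp.single_add]
            congr 1
            omega,
        show m + 2 - 1 = m + 1 from rfl,
        coeff_X_mul, IH (m + 1) (by omega) (by omega)]
    · intro k hk hk1
      simp only [Finset.mem_Icc] at hk
      rw [coeff_C_mul, show b k = X (Nat.toPNat k (by omega)) from hb (Nat.toPNat k (by omega)), coeff_X_mul']
      rw [if_neg, mul_zero]
      rw [Finsupp.mem_support_iff, Finsupp.single_eq_of_ne (by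
        intro hx
        have : ((1:ℕ+):ℕ) = ((⟨k, by omega⟩ : ℕ+) : ℕ) := congrArg (fun z : ℕ+ => (z : ℕ)) hx.symm
        simp only [PNat.mk_coe, PNat.one_coe] at this
        omega)]
      simp

end NewtonB

end NGP

open MvPolynomial TensorProduct in
/-- In `A = ℤ[b₁, b₂, …]` (formally `MvPolynomial ℕ+ ℤ`) with `b 0 = 1` and
`b k = X k` for `k ≥ 1`, coproduct `Δ (b n) = ∑_{i=0}^n b i ⊗ b (n - i)` and weight
`k` assigned to `b k`: for each `n ≥ 1`, every weighted-homogeneous `f` of weight `n`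
which is primitive (`Δ f = f ⊗ 1 + 1 ⊗ f`) is an integer multiple of the Newton
element `N n`; i.e. `N n` generates the group of primitives in weight `n`. -/
theorem newton_generates_primitives
    (b : ℕ → MvPolynomial ℕ+ ℤ) (hb0 : b 0 = 1)
    (hb : ∀ k : ℕ+, b k = X k)
    (Δ : MvPolynomial ℕ+ ℤ →ₐ[ℤ] MvPolynomial ℕ+ ℤ ⊗[ℤ] MvPolynomial ℕ+ ℤ)
    (hΔ : ∀ n : ℕ, 1 ≤ n →
      Δ (b n) = ∑ i ∈ Finset.range (n + 1), b i ⊗ₜ[ℤ] b (n - i)) :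
    ∀ n : ℕ, 1 ≤ n → ∀ f : MvPolynomial ℕ+ ℤ,
      f.IsWeightedHomogeneous (fun k : ℕ+ => (k : ℕ)) n →
      Δ f = f ⊗ₜ[ℤ] 1 + 1 ⊗ₜ[ℤ] f →
      ∃ c : ℤ, f = c • newton b n := by
  intro n hn f hhom hprim
  classical
  set jn : ℕ+ := ⟨n, hn⟩ with hjn
  -- primitivity gives the action of the lowering operators
  have hDf : ∀ j : ℕ+, NGP.Dop j f = C (coeff (Finsupp.single j 1) f) := by
    intro j
    have h1 := NGP.Lam_Delta b hb0 hb Δ hΔ j f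
    rw [hprim, map_add, NGP.Lam_tmul, NGP.Lam_tmul] at h1
    have hc1 : coeff (Finsupp.single j 1) (1 : MvPolynomial ℕ+ ℤ) = 0 := by
      rw [coeff_one, if_neg (by simp [eq_comm, Finsupp.single_eq_zero])]
    rw [hc1, zero_smul, add_zero] at h1
    rw [← h1, smul_eq_C_mul, mul_one]
  have hwt : ∀ j : ℕ+, (j : ℕ) ≠ n → coeff (Finsupp.single j 1) f = 0 := by
    intro j hj
    by_contra hc
    have h2 := hhom hc
    rw [Finsupp.weight_apply, Finsupp.sum_single_index (by simp)] at h2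
    simp only [smul_eq_mul, one_mul] at h2
    exact hj h2
  have hcc : constantCoeff f = 0 := by
    rw [constantCoeff_eq]
    by_contra hc
    have h2 := hhom hc
    rw [map_zero] at h2
    omega
  set cn : ℤ := coeff (Finsupp.single jn 1) f with hcn
  set c1 : ℤ := coeff (Finsupp.single (1 : ℕ+) n) f with hc1
  set g : MvPolynomial ℕ+ ℤ :=
    C ((-1 : ℤ) ^ (n - 1) * (n : ℤ)) * f - C cn * newton b n with hg
  have hker : ∀ j : ℕ+, NGP.Dop j g = 0 := by
    intro j
    rw [hg, map_sub, NGP.Dop_C_mul, NGP.Dop_C_mul, NGP.Dop_newton b hb0 hb n hn j, hDf j]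
    by_cases hj : (j : ℕ) = n
    · have : Finsupp.single j (1:ℕ) = Finsupp.single jn 1 := by
        congr 1
        exact PNat.coe_injective hj
      rw [if_pos hj, this, ← hcn, ← map_mul, ← map_mul, mul_comm]
      ring
    · rw [if_neg hj, hwt j hj, map_zero, mul_zero, mul_zero, sub_zero]
  have hg0 : g = 0 := by
    rw [MvPolynomial.eq_zero_iff]
    intro d
    by_cases hd : d = 0
    · subst hd
      rw [← constantCoeff_eq, hg]
      simp [hcc, NGP.cc_newton b hb0 hb n hn]
    · exact NGP.coeff_eq_zero_of_Dop_ker g hker d.degree d hd rfl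
  have heq : C ((-1 : ℤ) ^ (n - 1) * (n : ℤ)) * f = C cn * newton b n :=
    sub_eq_zero.mp hg0
  have hco := congrArg (coeff (Finsupp.single (1 : ℕ+) n)) heq
  rw [coeff_C_mul, coeff_C_mul, NGP.coeff_newton_X1 b hb0 hb n hn, mul_one, ← hc1] at hco
  refine ⟨c1, ?_⟩
  have hC0 : (C ((-1 : ℤ) ^ (n - 1) * (n : ℤ)) : MvPolynomial ℕ+ ℤ) ≠ 0 := by
    rw [ne_eq, MvPolynomial.C_eq_zero]
    intro hz
    rcases mul_eq_zero.mp hz with h | h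
    · exact absurd h (pow_ne_zero _ (by norm_num))
    · have : (n : ℤ) ≠ 0 := by exact_mod_cast (by omega : n ≠ 0)
      exact this h
  apply mul_left_cancel₀ hC0
  rw [heq, smul_eq_C_mul, ← mul_assoc, ← map_mul, ← hco]
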